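/- Let n ≥ 1 samples x^(1),…,x^(n) ∈ {0,1}^d be given, let λ > 0 and γ > 0, and let Ω' and T' be linear subspaces of Sym(d) with Ω' ∩ T' = {0}. Then the tangent-space constrained problem min over (S, L) ∈ Ω' × T' of ℓ(S+L) + λ(γ‖S‖₁ + ‖L‖_*) is feasible and has a unique solution. (In particular, the Ising negative log-likelihood Θ ↦ ℓ(Θ) is strictly convex on Sym(d), and the objective is strictly convex on Ω' × T'.) -/

import Mathlib

noncomputable section

open scoped BigOperators
open Matrix

namespace IsingSL

/-- The space of real `d × d` matrices.  Symmetry (membership in `Sym(d)`) is imposed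
through explicit hypotheses `Matrix.IsSymm`. -/
abbrev Mat (d : ℕ) := Matrix (Fin d) (Fin d) ℝ

/-- The trace inner product `⟨A, B⟩ = tr(Aᵀ B)`. -/
def minner {d : ℕ} (A B : Mat d) : ℝ := (Aᵀ * B).trace

/-- Entrywise `ℓ∞`-norm of a matrix. -/
def normInf {d : ℕ} (M : Mat d) : ℝ := ⨆ p : Fin d × Fin d, |M p.1 p.2|

/-- Entrywise `ℓ1`-norm of a matrix. -/
def norm1 {d : ℕ} (M : Mat d) : ℝ := ∑ i, ∑ j, |M i j|

/-- Euclidean norm of a vector. -/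
def vnorm {d : ℕ} (v : Fin d → ℝ) : ℝ := Real.sqrt (∑ i, v i ^ 2)

/-- Spectral norm (`ℓ2`-operator norm) of a matrix. -/
def specNorm {d : ℕ} (M : Mat d) : ℝ :=
  sSup {t | ∃ v : Fin d → ℝ, vnorm v ≤ 1 ∧ t = vnorm (M.mulVec v)}

/-- Nuclear norm of a matrix (sum of singular values), characterized via
trace duality with the spectral norm. -/
def nucNorm {d : ℕ} (M : Mat d) : ℝ :=
  sSup {t | ∃ B : Mat d, specNorm B ≤ 1 ∧ t = minner M B}

/-- The `γ`-norm of a pair of matrices: `‖(S, L)‖_γ = max {‖S‖_∞/γ, ‖L‖}`. -/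
def ganorm {d : ℕ} (γ : ℝ) (S L : Mat d) : ℝ := max (normInf S / γ) (specNorm L)

/-- The `{0,1}`-vector corresponding to `x : Fin d → Bool`. -/
def b2r {d : ℕ} (x : Fin d → Bool) : Fin d → ℝ := fun i => if x i then 1 else 0

/-- The sufficient statistics `Φ(x) = x xᵀ` for `x ∈ {0,1}^d`. -/
def phi {d : ℕ} (x : Fin d → Bool) : Mat d := Matrix.of fun i j => b2r x i * b2r x j

/-- The log-partition function `a(Θ)` of the pairwise Ising model. -/
def logA {d : ℕ} (Θ : Mat d) : ℝ :=
  Real.log (∑ x : Fin d → Bool, Real.exp (minner Θ (phi x)))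

/-- The Ising probability mass function `p(x) = exp(⟨Θ, Φ(x)⟩ - a(Θ))`. -/
def isingPMF {d : ℕ} (Θ : Mat d) (x : Fin d → Bool) : ℝ :=
  Real.exp (minner Θ (phi x) - logA Θ)

/-- `Φ* = E_Θ[Φ]`, the expected sufficient statistics; this is the gradient `∇a(Θ)`
of the log-partition function w.r.t. the trace inner product. -/
def meanPhi {d : ℕ} (Θ : Mat d) : Mat d := ∑ x : Fin d → Bool, isingPMF Θ x • phi x

/-- The Hessian `∇²a(Θ)` of the log-partition function as a linear operator on matrices;
it is the covariance operator `M ↦ E[⟨Φ,M⟩Φ] - ⟨E[Φ],M⟩E[Φ]` of the sufficient statistics. -/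
def hessA {d : ℕ} (Θ : Mat d) (M : Mat d) : Mat d :=
  (∑ x : Fin d → Bool, (isingPMF Θ x * minner (phi x) M) • phi x)
    - minner (meanPhi Θ) M • meanPhi Θ

/-- The empirical second-moment matrix `Φ^n` of a sample. -/
def empPhi {d n : ℕ} (xs : Fin n → (Fin d → Bool)) : Mat d :=
  (n : ℝ)⁻¹ • ∑ k, phi (xs k)

/-- The negative log-likelihood `ℓ(Θ) = a(Θ) - ⟨Θ, Φ^n⟩`. -/
def nll {d : ℕ} (Phin Θ : Mat d) : ℝ := logA Θ - minner Θ Phin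

/-- The probability of the event `E` under `n` i.i.d. samples from the Ising
distribution with parameter `Θ`. -/
def samplesProb {d : ℕ} (Θ : Mat d) (n : ℕ) (E : Set (Fin n → (Fin d → Bool))) : ℝ :=
  ∑ xs : Fin n → (Fin d → Bool), E.indicator (fun ys => ∏ k, isingPMF Θ (ys k)) xs

/-- Probability vectors on `{0,1}^d`. -/
def IsProbVec {d : ℕ} (p : (Fin d → Bool) → ℝ) : Prop :=
  (∀ x, 0 ≤ p x) ∧ ∑ x : Fin d → Bool, p x = 1

/-- The (Shannon) entropy `H(p) = -Σ_x p(x) log p(x)` (with `0 log 0 = 0`). -/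
def entropy {d : ℕ} (p : (Fin d → Bool) → ℝ) : ℝ :=
  -∑ x : Fin d → Bool, p x * Real.log (p x)

/-- The expectation `E_p[Φ]` of the sufficient statistics under `p`. -/
def Ephi {d : ℕ} (p : (Fin d → Bool) → ℝ) : Mat d :=
  ∑ x : Fin d → Bool, p x • phi x

/-- The linear identification of `d × d` matrices with the euclidean space on `d·d`
coordinates; under this identification the euclidean inner product corresponds to the
trace inner product on matrices. -/
def matEuclid (d : ℕ) : Mat d ≃ₗ[ℝ] EuclideanSpace ℝ (Fin d × Fin d) where
  toFun M := WithLp.toLp 2 (fun p => M p.1 p.2)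
  invFun v := Matrix.of fun i j => v (i, j)
  map_add' _ _ := rfl
  map_smul' _ _ := rfl
  left_inv _ := rfl
  right_inv _ := rfl

/-- Orthogonal projection onto a subspace `V` of `Mat d`, w.r.t. the trace inner product. -/
def proj {d : ℕ} (V : Submodule ℝ (Mat d)) (M : Mat d) : Mat d :=
  (matEuclid d).symm
    ((Submodule.orthogonalProjectionOnto (V.map ((matEuclid d) : Mat d →ₗ[ℝ] EuclideanSpace ℝ (Fin d × Fin d)))
      ((matEuclid d) M) : EuclideanSpace ℝ (Fin d × Fin d)))

/-- Projection onto the orthogonal complement of `V`. -/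
def projPerp {d : ℕ} (V : Submodule ℝ (Mat d)) (M : Mat d) : Mat d := M - proj V M

/-- The twisting `ρ(T, T') = max_{‖M‖=1} ‖(P_T - P_{T'}) M‖` between two subspaces. -/
def rho {d : ℕ} (T T' : Submodule ℝ (Mat d)) : ℝ :=
  sSup {t | ∃ M : Mat d, specNorm M = 1 ∧ t = specNorm (proj T M - proj T' M)}

/-- `ξ(T)`: the smallest `ξ` with `‖M‖_∞ ≤ ξ ‖M‖` for all `M ∈ T`. -/
def xi {d : ℕ} (T : Submodule ℝ (Mat d)) : ℝ :=
  sInf {c | ∀ M ∈ T, normInf M ≤ c * specNorm M}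

/-- `μ(Ω)`: the smallest `μ` with `‖N‖ ≤ μ ‖N‖_∞` for all `N ∈ Ω`. -/
def mu {d : ℕ} (Om : Submodule ℝ (Mat d)) : ℝ :=
  sInf {c | ∀ N ∈ Om, specNorm N ≤ c * normInf N}

/-- `Ω(S) = {M ∈ Sym(d) : supp(M) ⊆ supp(S)}`, the tangent space at `S` to the variety
of symmetric matrices with at most `|supp S|` nonzero entries. -/
def OmegaS {d : ℕ} (S : Mat d) : Submodule ℝ (Mat d) where
  carrier := {M | M.IsSymm ∧ ∀ i j, S i j = 0 → M i j = 0}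
  add_mem' := by
    rintro a b ⟨ha, ha0⟩ ⟨hb, hb0⟩
    refine ⟨?_, fun i j h => ?_⟩
    · show (a + b)ᵀ = a + b
      rw [Matrix.transpose_add, ha, hb]
    · show a i j + b i j = 0
      rw [ha0 i j h, hb0 i j h, add_zero]
  zero_mem' := by
    refine ⟨?_, fun i j _ => rfl⟩
    show (0 : Mat _)ᵀ = 0
    rw [Matrix.transpose_zero]
  smul_mem' := by
    rintro c a ⟨ha, ha0⟩
    refine ⟨?_, fun i j h => ?_⟩
    · show (c • a)ᵀ = c • a
      rw [Matrix.transpose_smul, ha]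
    · show c * a i j = 0
      rw [ha0 i j h, mul_zero]

/-- `T(L) = {U Xᵀ + X Uᵀ : X ∈ ℝ^{d×r}}`, the tangent space at `L = U D Uᵀ` to the
variety of symmetric matrices of rank at most `r`. -/
def TSpace {d r : ℕ} (U : Matrix (Fin d) (Fin r) ℝ) : Submodule ℝ (Mat d) where
  carrier := {M | ∃ X : Matrix (Fin d) (Fin r) ℝ, M = U * Xᵀ + X * Uᵀ}
  add_mem' := by
    rintro a b ⟨X, rfl⟩ ⟨Y, rfl⟩
    exact ⟨X + Y, by rw [Matrix.transpose_add, Matrix.mul_add, Matrix.add_mul]; abel⟩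
  zero_mem' := ⟨0, by simp⟩
  smul_mem' := by
    rintro c a ⟨X, rfl⟩
    exact ⟨c • X, by rw [Matrix.transpose_smul, Matrix.mul_smul, Matrix.smul_mul, smul_add]⟩

/-- `T'` is the tangent space `T(L')` at some rank-`r` symmetric matrix
`L' = U D Uᵀ` (restricted eigenvalue decomposition: `U` with orthonormal columns,
`D` invertible diagonal). -/
def IsTangentSpace (d r : ℕ) (T' : Submodule ℝ (Mat d)) : Prop :=
  ∃ (U : Matrix (Fin d) (Fin r) ℝ) (D : Matrix (Fin r) (Fin r) ℝ),
    Uᵀ * U = 1 ∧ D.IsDiag ∧ IsUnit D.det ∧ T' = TSpace U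

/-- A solution of the tangent-space constrained problem
`min_{(S,L) ∈ Om × T'} ℓ(S+L) + λ(γ‖S‖₁ + ‖L‖_*)`. -/
def IsYSol {d : ℕ} (Om T' : Submodule ℝ (Mat d)) (Phin : Mat d) (lam γ : ℝ)
    (p : Mat d × Mat d) : Prop :=
  p.1 ∈ Om ∧ p.2 ∈ T' ∧
    ∀ q : Mat d × Mat d, q.1 ∈ Om → q.2 ∈ T' →
      nll Phin (p.1 + p.2) + lam * (γ * norm1 p.1 + nucNorm p.2) ≤
        nll Phin (q.1 + q.2) + lam * (γ * norm1 q.1 + nucNorm q.2)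

/-- A solution of the convex program
`min_{S, L ∈ Sym(d), L ⪰ 0} ℓ(S+L) + λ(γ‖S‖₁ + tr L)`. -/
def IsSLSol {d : ℕ} (Phin : Mat d) (lam γ : ℝ) (p : Mat d × Mat d) : Prop :=
  p.1.IsSymm ∧ p.2.PosSemidef ∧
    ∀ q : Mat d × Mat d, q.1.IsSymm → q.2.PosSemidef →
      nll Phin (p.1 + p.2) + lam * (γ * norm1 p.1 + p.2.trace) ≤
        nll Phin (q.1 + q.2) + lam * (γ * norm1 q.1 + q.2.trace)

/-- The setup: a nonzero symmetric matrix `S*` and a positive-semidefinite `L*` with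
restricted eigenvalue decomposition `L* = U D Uᵀ` (so `L*` has rank `r`). -/
structure Setup (d r : ℕ) where
  Sstar : Mat d
  U : Matrix (Fin d) (Fin r) ℝ
  Dg : Matrix (Fin r) (Fin r) ℝ
  hU : Uᵀ * U = 1
  hDdiag : Dg.IsDiag
  hDunit : IsUnit Dg.det
  hSsymm : Sstar.IsSymm
  hSne : Sstar ≠ 0
  hLpsd : (U * Dg * Uᵀ).PosSemidef

namespace Setup

variable {d r : ℕ} (C : Setup d r)

/-- `L* = U D Uᵀ`. -/
def Lstar : Mat d := C.U * C.Dg * C.Uᵀ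

/-- `Θ* = S* + L*`. -/
def Thstar : Mat d := C.Sstar + C.Lstar

/-- `Ω = Ω(S*)`. -/
def Om : Submodule ℝ (Mat d) := OmegaS C.Sstar

/-- `T = T(L*)`. -/
def Tt : Submodule ℝ (Mat d) := TSpace C.U

/-- `H* = ∇²a(Θ*)`, the Hessian of the log-partition function at `Θ*`. -/
def Hop : Mat d → Mat d := hessA C.Thstar

/-- `‖H*‖`, the operator norm of `H*` w.r.t. the spectral norm. -/
def HopNorm : ℝ := sSup {t | ∃ M : Mat d, specNorm M = 1 ∧ t = specNorm (C.Hop M)}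

/-- `ξ(T)`. -/
def xiT : ℝ := xi C.Tt

/-- `μ(Ω)`. -/
def muOm : ℝ := mu C.Om

/-- `α_Ω = min {‖P_Ω H*(M)‖_∞ : M ∈ Ω, ‖M‖_∞ = 1}`. -/
def alphaOm : ℝ :=
  sInf {t | ∃ M, M ∈ C.Om ∧ normInf M = 1 ∧ t = normInf (proj C.Om (C.Hop M))}

/-- `α_{T,ε}`. -/
def alphaT (ε : ℝ) : ℝ :=
  sInf {t | ∃ T' : Submodule ℝ (Mat d), IsTangentSpace d r T' ∧ rho C.Tt T' ≤ ε ∧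
    ∃ M, M ∈ T' ∧ specNorm M = 1 ∧ t = specNorm (proj T' (C.Hop M))}

/-- `δ_Ω = max {‖P_{Ω^⊥} H*(M)‖_∞ : M ∈ Ω, ‖M‖_∞ = 1}`. -/
def deltaOm : ℝ :=
  sSup {t | ∃ M, M ∈ C.Om ∧ normInf M = 1 ∧ t = normInf (projPerp C.Om (C.Hop M))}

/-- `δ_{T,ε}`. -/
def deltaT (ε : ℝ) : ℝ :=
  sSup {t | ∃ T' : Submodule ℝ (Mat d), IsTangentSpace d r T' ∧ rho C.Tt T' ≤ ε ∧
    ∃ M, M ∈ T' ∧ specNorm M = 1 ∧ t = specNorm (projPerp T' (C.Hop M))}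

/-- `β_Ω = max {‖H*(M)‖ : M ∈ Ω, ‖M‖ = 1}`. -/
def betaOm : ℝ :=
  sSup {t | ∃ M, M ∈ C.Om ∧ specNorm M = 1 ∧ t = specNorm (C.Hop M)}

/-- `β_T`. -/
def betaT : ℝ :=
  sSup {t | ∃ T' : Submodule ℝ (Mat d), IsTangentSpace d r T' ∧ rho C.Tt T' ≤ C.xiT / 2 ∧
    ∃ M, M ∈ T' ∧ normInf M = 1 ∧ t = normInf (C.Hop M)}

/-- `β = max {β_Ω, β_T}`. -/
def betaC : ℝ := max C.betaOm C.betaT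

/-- `α = min {α_Ω, α_{T,ξ(T)/2}}`. -/
def alphaC : ℝ := min C.alphaOm (C.alphaT (C.xiT / 2))

/-- `δ = max {δ_Ω, δ_{T,ξ(T)/2}}`. -/
def deltaC : ℝ := max C.deltaOm (C.deltaT (C.xiT / 2))

/-- The stability assumption: `α > 0` and `δ/α ≤ 1 - 2ν` for some `ν ∈ (0, 1/2]`. -/
def Stability (ν : ℝ) : Prop :=
  0 < C.alphaC ∧ 0 < ν ∧ ν ≤ 1 / 2 ∧ C.deltaC / C.alphaC ≤ 1 - 2 * ν

/-- `γ_min = 3β(2-ν)ξ(T)/(να)`. -/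
def gammaMin (ν : ℝ) : ℝ := 3 * C.betaC * (2 - ν) * C.xiT / (ν * C.alphaC)

/-- `γ_max = να/(2β(2-ν)μ(Ω))`. -/
def gammaMax (ν : ℝ) : ℝ := ν * C.alphaC / (2 * C.betaC * (2 - ν) * C.muOm)

/-- The `γ`-feasibility assumption: the range `[γ_min, γ_max]` is non-empty. -/
def GammaFeasible (ν : ℝ) : Prop := C.gammaMin ν ≤ C.gammaMax ν

/-- `ω = max {να/(3β(2-ν)), 1}`. -/
def omg (ν : ℝ) : ℝ := max (ν * C.alphaC / (3 * C.betaC * (2 - ν))) 1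

/-- `c₂ = 40/α + 1/‖H*‖`. -/
def c2 : ℝ := 40 / C.alphaC + 1 / C.HopNorm

/-- `c₃ = (6(2-ν)/ν + 1) c₂² ‖H*‖ ω`. -/
def c3 (ν : ℝ) : ℝ := (6 * (2 - ν) / ν + 1) * C.c2 ^ 2 * C.HopNorm * C.omg ν

/-- `c₄ = c₂ + 3αc₂²(2-ν)/(16(3-ν))`. -/
def c4 (ν : ℝ) : ℝ := C.c2 + 3 * C.alphaC * C.c2 ^ 2 * (2 - ν) / (16 * (3 - ν))

/-- `c₅ = max {c₃, c₄}`. -/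
def c5 (ν : ℝ) : ℝ := max (C.c3 ν) (C.c4 ν)

/-- `c₆ = ναc₂/(2β(2-ν))`. -/
def c6 (ν : ℝ) : ℝ := ν * C.alphaC * C.c2 / (2 * C.betaC * (2 - ν))

/-- `c₀ = 2 l(r₀) ω max{να/(2β(2-ν)), 1}²`. -/
def c0 (ν l0 : ℝ) : ℝ :=
  2 * l0 * C.omg ν * (max (ν * C.alphaC / (2 * C.betaC * (2 - ν))) 1) ^ 2

/-- `c₁ = max{1, να/(2β(2-ν))}⁻¹ r₀/2`. -/
def c1 (ν r0 : ℝ) : ℝ :=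
  (max 1 (ν * C.alphaC / (2 * C.betaC * (2 - ν))))⁻¹ * r0 / 2

/-- `s_min`, the smallest absolute value of a nonzero entry of `S*`. -/
def smin : ℝ := sInf {t | ∃ i j, C.Sstar i j ≠ 0 ∧ t = |C.Sstar i j|}

/-- `σ_min`, the smallest nonzero eigenvalue of `L*`. -/
def sigmin : ℝ := sInf {t | t ≠ 0 ∧ ∃ i, t = C.hLpsd.1.eigenvalues i}

/-- The gap assumption: `s_min ≥ c₆λ_n/μ(Ω)` and `σ_min ≥ c₅λ_n/ξ(T)²`. -/
def GapAssumption (ν lam : ℝ) : Prop :=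
  C.c6 ν * lam / C.muOm ≤ C.smin ∧ C.c5 ν * lam / C.xiT ^ 2 ≤ C.sigmin

/-- `l0` is a Lipschitz constant (in operator norm w.r.t. the spectral norm) of the
Hessian `∇²a` on the ball `{Θ : ‖Θ - Θ*‖ ≤ r0}`. -/
def HessLip (r0 l0 : ℝ) : Prop :=
  ∀ Θ Θ' : Mat d, specNorm (Θ - C.Thstar) ≤ r0 → specNorm (Θ' - C.Thstar) ≤ r0 →
    ∀ M : Mat d, specNorm (hessA Θ M - hessA Θ' M) ≤ l0 * specNorm (Θ - Θ') * specNorm M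

/-- The correct model set `M`. -/
def Mset (γ ν lam : ℝ) : Set (Mat d × Mat d) :=
  {p | p.1 ∈ C.Om ∧ p.2.IsSymm ∧ p.2.rank ≤ C.Lstar.rank ∧
    ganorm γ (C.Hop ((p.1 - C.Sstar) + (p.2 - C.Lstar)))
      (C.Hop ((p.1 - C.Sstar) + (p.2 - C.Lstar))) ≤ 9 * lam ∧
    specNorm (projPerp C.Tt (p.2 - C.Lstar)) ≤ C.xiT * lam / (C.omg ν * C.HopNorm)}

end Setup

section AuxBasic

variable {d : ℕ}

lemma minner_eq (A B : Mat d) : minner A B = ∑ i, ∑ j, A i j * B i j := by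
  unfold minner Matrix.trace
  simp only [Matrix.diag_apply, Matrix.mul_apply, Matrix.transpose_apply]
  rw [Finset.sum_comm]

lemma minner_add_left (A B C : Mat d) : minner (A + B) C = minner A C + minner B C := by
  simp [minner_eq, Matrix.add_apply, add_mul, Finset.sum_add_distrib]

lemma minner_smul_left (c : ℝ) (A B : Mat d) : minner (c • A) B = c * minner A B := by
  simp [minner_eq, Matrix.smul_apply, smul_eq_mul, Finset.mul_sum, mul_assoc]

lemma minner_smul_right (c : ℝ) (A B : Mat d) : minner A (c • B) = c * minner A B := by
  simp only [minner_eq, Matrix.smul_apply, smul_eq_mul, Finset.mul_sum]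
  congr 1; ext i; congr 1; ext j; ring

lemma minner_zero_right (A : Mat d) : minner A 0 = 0 := by
  simp [minner_eq]

lemma minner_add_right (A B C : Mat d) : minner A (B + C) = minner A B + minner A C := by
  simp [minner_eq, Matrix.add_apply, mul_add, Finset.sum_add_distrib]

lemma minner_sum_right {ι : Type*} (s : Finset ι) (A : Mat d) (f : ι → Mat d) :
    minner A (∑ k ∈ s, f k) = ∑ k ∈ s, minner A (f k) := by
  classical
  induction s using Finset.induction_on with
  | empty => simp [minner_zero_right]
  | insert a s h ih => simp [Finset.sum_insert h, minner_add_right, ih]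

end AuxBasic
section AuxBasic2
variable {d : ℕ}
lemma minner_sub_left (A B C : Mat d) : minner (A - B) C = minner A C - minner B C := by
  simp [minner_eq, Matrix.sub_apply, sub_mul, Finset.sum_sub_distrib]
end AuxBasic2
section Norms

variable {d : ℕ}

lemma vnorm_nonneg (v : Fin d → ℝ) : 0 ≤ vnorm v := Real.sqrt_nonneg _

lemma vnorm_zero' : vnorm (0 : Fin d → ℝ) = 0 := by simp [vnorm]

lemma abs_le_vnorm (v : Fin d → ℝ) (j : Fin d) : |v j| ≤ vnorm v := by
  rw [vnorm, ← Real.sqrt_sq_eq_abs]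
  exact Real.sqrt_le_sqrt (Finset.single_le_sum (f := fun i => v i ^ 2)
    (fun i _ => sq_nonneg _) (Finset.mem_univ j))

lemma vnorm_le_sum_abs (v : Fin d → ℝ) : vnorm v ≤ ∑ i, |v i| := by
  rw [vnorm]
  have h : ∑ i, v i ^ 2 ≤ (∑ i, |v i|) ^ 2 := by
    have hstep : ∀ i ∈ Finset.univ, v i ^ 2 ≤ |v i| * (∑ k, |v k|) := by
      intro i _
      have h1 : |v i| ≤ ∑ k, |v k| :=
        Finset.single_le_sum (f := fun k => |v k|) (fun k _ => abs_nonneg _) (Finset.mem_univ i)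
      nlinarith [abs_nonneg (v i), sq_abs (v i)]
    calc ∑ i, v i ^ 2 ≤ ∑ i, |v i| * (∑ k, |v k|) := Finset.sum_le_sum hstep
      _ = (∑ i, |v i|) ^ 2 := by rw [← Finset.sum_mul]; ring
  calc Real.sqrt (∑ i, v i ^ 2) ≤ Real.sqrt ((∑ i, |v i|) ^ 2) := Real.sqrt_le_sqrt h
    _ = ∑ i, |v i| := Real.sqrt_sq (Finset.sum_nonneg fun i _ => abs_nonneg _)

lemma norm1_nonneg (M : Mat d) : 0 ≤ norm1 M :=
  Finset.sum_nonneg fun i _ => Finset.sum_nonneg fun j _ => abs_nonneg _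

lemma abs_entry_le_norm1 (M : Mat d) (i j : Fin d) : |M i j| ≤ norm1 M := by
  unfold norm1
  calc |M i j| ≤ ∑ l, |M i l| :=
        Finset.single_le_sum (f := fun l => |M i l|) (fun l _ => abs_nonneg _) (Finset.mem_univ j)
    _ ≤ ∑ k, ∑ l, |M k l| :=
        Finset.single_le_sum (f := fun k => ∑ l, |M k l|)
          (fun k _ => Finset.sum_nonneg fun l _ => abs_nonneg _) (Finset.mem_univ i)

lemma norm1_comb {a b : ℝ} (ha : 0 ≤ a) (hb : 0 ≤ b) (A B : Mat d) :
    norm1 (a • A + b • B) ≤ a * norm1 A + b * norm1 B := by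
  unfold norm1
  rw [Finset.mul_sum, Finset.mul_sum, ← Finset.sum_add_distrib]
  refine Finset.sum_le_sum fun i _ => ?_
  rw [Finset.mul_sum, Finset.mul_sum, ← Finset.sum_add_distrib]
  refine Finset.sum_le_sum fun j _ => ?_
  calc |(a • A + b • B) i j| = |a * A i j + b * B i j| := by
        simp [Matrix.add_apply, Matrix.smul_apply, smul_eq_mul]
    _ ≤ |a * A i j| + |b * B i j| := abs_add_le _ _
    _ = a * |A i j| + b * |B i j| := by
        rw [abs_mul, abs_mul, abs_of_nonneg ha, abs_of_nonneg hb]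

lemma vnorm_mulVec_le_norm1 (M : Mat d) {v : Fin d → ℝ} (hv : vnorm v ≤ 1) :
    vnorm (M.mulVec v) ≤ norm1 M := by
  calc vnorm (M.mulVec v) ≤ ∑ i, |M.mulVec v i| := vnorm_le_sum_abs _
    _ ≤ ∑ i, ∑ j, |M i j| := by
        refine Finset.sum_le_sum fun i _ => ?_
        calc |M.mulVec v i| = |∑ j, M i j * v j| := by
              simp [Matrix.mulVec, dotProduct]
          _ ≤ ∑ j, |M i j * v j| := Finset.abs_sum_le_sum_abs _ _
          _ ≤ ∑ j, |M i j| := by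
              refine Finset.sum_le_sum fun j _ => ?_
              rw [abs_mul]
              exact mul_le_of_le_one_right (abs_nonneg _)
                ((abs_le_vnorm v j).trans hv)
    _ = norm1 M := rfl

lemma specSet_nonempty (M : Mat d) :
    {t | ∃ v : Fin d → ℝ, vnorm v ≤ 1 ∧ t = vnorm (M.mulVec v)}.Nonempty :=
  ⟨0, 0, by rw [vnorm_zero']; norm_num, by rw [Matrix.mulVec_zero, vnorm_zero']⟩

lemma specSet_bddAbove (M : Mat d) :
    BddAbove {t | ∃ v : Fin d → ℝ, vnorm v ≤ 1 ∧ t = vnorm (M.mulVec v)} :=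
  ⟨norm1 M, by rintro t ⟨v, hv, rfl⟩; exact vnorm_mulVec_le_norm1 M hv⟩

lemma specNorm_nonneg (M : Mat d) : 0 ≤ specNorm M := by
  refine le_csSup (specSet_bddAbove M) ⟨0, ?_, ?_⟩
  · rw [vnorm_zero']; norm_num
  · rw [Matrix.mulVec_zero, vnorm_zero']

lemma specNorm_le_norm1 (M : Mat d) : specNorm M ≤ norm1 M :=
  csSup_le (specSet_nonempty M) (by rintro t ⟨v, hv, rfl⟩; exact vnorm_mulVec_le_norm1 M hv)

lemma vnorm_mulVec_le_specNorm (M : Mat d) {v : Fin d → ℝ} (hv : vnorm v ≤ 1) :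
    vnorm (M.mulVec v) ≤ specNorm M :=
  le_csSup (specSet_bddAbove M) ⟨v, hv, rfl⟩

lemma abs_entry_le_specNorm (M : Mat d) (i j : Fin d) : |M i j| ≤ specNorm M := by
  set e : Fin d → ℝ := fun k => if k = j then 1 else 0 with he
  have hsum : ∑ k, e k ^ 2 = 1 := by
    simp [he, apply_ite (· ^ 2), Finset.sum_ite_eq']
  have hev : vnorm e ≤ 1 := by rw [vnorm, hsum, Real.sqrt_one]
  have hme : M.mulVec e i = M i j := by
    simp [Matrix.mulVec, dotProduct, he, mul_ite, Finset.sum_ite_eq']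
  calc |M i j| = |M.mulVec e i| := by rw [hme]
    _ ≤ vnorm (M.mulVec e) := abs_le_vnorm _ _
    _ ≤ specNorm M := vnorm_mulVec_le_specNorm M hev

lemma specNorm_zero : specNorm (0 : Mat d) ≤ 1 :=
  csSup_le (specSet_nonempty 0) (by
    rintro t ⟨v, hv, rfl⟩
    rw [Matrix.zero_mulVec, vnorm_zero']; norm_num)

lemma minner_le_norm1 (M C : Mat d) (hC : specNorm C ≤ 1) : minner M C ≤ norm1 M := by
  rw [minner_eq]
  calc ∑ i, ∑ j, M i j * C i j ≤ ∑ i, ∑ j, |M i j * C i j| := by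
        refine Finset.sum_le_sum fun i _ => ?_
        calc ∑ j, M i j * C i j ≤ |∑ j, M i j * C i j| := le_abs_self _
          _ ≤ ∑ j, |M i j * C i j| := Finset.abs_sum_le_sum_abs _ _
    _ ≤ ∑ i, ∑ j, |M i j| := by
        refine Finset.sum_le_sum fun i _ => Finset.sum_le_sum fun j _ => ?_
        rw [abs_mul]
        exact mul_le_of_le_one_right (abs_nonneg _)
          ((abs_entry_le_specNorm C i j).trans hC)
    _ = norm1 M := rfl

lemma nucSet_nonempty (M : Mat d) :
    {t | ∃ B : Mat d, specNorm B ≤ 1 ∧ t = minner M B}.Nonempty :=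
  ⟨minner M 0, 0, specNorm_zero, rfl⟩

lemma nucSet_bddAbove (M : Mat d) :
    BddAbove {t | ∃ B : Mat d, specNorm B ≤ 1 ∧ t = minner M B} :=
  ⟨norm1 M, by rintro t ⟨B, hB, rfl⟩; exact minner_le_norm1 M B hB⟩

lemma minner_le_nucNorm (M C : Mat d) (hC : specNorm C ≤ 1) : minner M C ≤ nucNorm M :=
  le_csSup (nucSet_bddAbove M) ⟨C, hC, rfl⟩

lemma nucNorm_nonneg (M : Mat d) : 0 ≤ nucNorm M := by
  have := minner_le_nucNorm M 0 specNorm_zero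
  rwa [minner_zero_right] at this

lemma nucNorm_le_norm1 (M : Mat d) : nucNorm M ≤ norm1 M :=
  csSup_le (nucSet_nonempty M) (by rintro t ⟨B, hB, rfl⟩; exact minner_le_norm1 M B hB)

lemma nucNorm_lip (A B : Mat d) : nucNorm A ≤ nucNorm B + norm1 (A - B) := by
  refine csSup_le (nucSet_nonempty A) ?_
  rintro t ⟨C, hC, rfl⟩
  have : minner A C = minner B C + minner (A - B) C := by
    rw [minner_sub_left]; ring
  rw [this]
  exact add_le_add (minner_le_nucNorm B C hC) (minner_le_norm1 _ C hC)

lemma nucNorm_comb {a b : ℝ} (ha : 0 ≤ a) (hb : 0 ≤ b) (A B : Mat d) :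
    nucNorm (a • A + b • B) ≤ a * nucNorm A + b * nucNorm B := by
  refine csSup_le (nucSet_nonempty _) ?_
  rintro t ⟨C, hC, rfl⟩
  rw [minner_add_left, minner_smul_left, minner_smul_left]
  exact add_le_add (mul_le_mul_of_nonneg_left (minner_le_nucNorm A C hC) ha)
    (mul_le_mul_of_nonneg_left (minner_le_nucNorm B C hC) hb)

lemma abs_entry_le_nucNorm (M : Mat d) (i j : Fin d) : |M i j| ≤ nucNorm M := by
  set c : ℝ := if 0 ≤ M i j then 1 else -1 with hc
  have hcabs : |c| = 1 := by
    rw [hc]; split_ifs <;> simp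
  set B : Mat d := Matrix.of fun k l => if k = i ∧ l = j then c else 0 with hB
  have hmv : ∀ v : Fin d → ℝ, B.mulVec v = fun k => if k = i then c * v j else 0 := by
    intro v
    funext k
    simp only [Matrix.mulVec, dotProduct, hB, Matrix.of_apply]
    by_cases hk : k = i
    · subst hk
      simp [Finset.sum_ite_eq', ite_mul]
    · simp [hk, ite_mul]
  have hBspec : specNorm B ≤ 1 := by
    refine csSup_le (specSet_nonempty B) ?_
    rintro t ⟨v, hv, rfl⟩
    rw [hmv v]
    have hsq : ∑ k, (if k = i then c * v j else 0) ^ 2 = (c * v j) ^ 2 := by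
      simp [apply_ite (· ^ 2), Finset.sum_ite_eq']
    have : vnorm (fun k => if k = i then c * v j else 0) = |c * v j| := by
      rw [vnorm, hsq, Real.sqrt_sq_eq_abs]
    rw [this, abs_mul, hcabs, one_mul]
    exact (abs_le_vnorm v j).trans hv
  have hinner : minner M B = |M i j| := by
    rw [minner_eq]
    have : ∀ k, ∑ l, M k l * B k l = if k = i then M k j * c else 0 := by
      intro k
      simp only [hB, Matrix.of_apply]
      by_cases hk : k = i
      · subst hk
        simp [mul_ite, Finset.sum_ite_eq']
      · simp [hk, mul_ite]
    rw [Finset.sum_congr rfl fun k _ => this k, Finset.sum_ite_eq']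
    simp only [Finset.mem_univ, if_true]
    rw [hc]
    split_ifs with h
    · rw [mul_one, abs_of_nonneg h]
    · rw [abs_of_neg (lt_of_not_ge h)]; ring
  rw [← hinner]
  exact minner_le_nucNorm M B hBspec

end Norms
section LSE

lemma lse_strictConvexOn {ι : Type*} [Fintype ι] [Nonempty ι] (u w : ι → ℝ)
    (hw : ∃ x y : ι, w x ≠ w y) :
    StrictConvexOn ℝ Set.univ (fun t : ℝ => Real.log (∑ x, Real.exp (u x + t * w x))) := by
  classical
  set g : ℝ → ℝ := fun t => ∑ x, Real.exp (u x + t * w x) with hg_def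
  set g1 : ℝ → ℝ := fun t => ∑ x, w x * Real.exp (u x + t * w x) with hg1_def
  set g2 : ℝ → ℝ := fun t => ∑ x, w x ^ 2 * Real.exp (u x + t * w x) with hg2_def
  have hgpos : ∀ t, 0 < g t :=
    fun t => Finset.sum_pos (fun x _ => Real.exp_pos _) Finset.univ_nonempty
  have hinner : ∀ (x : ι) (t : ℝ), HasDerivAt (fun t => u x + t * w x) (w x) t := by
    intro x t
    simpa using ((hasDerivAt_id t).mul_const (w x)).const_add (u x)
  have hgd : ∀ t, HasDerivAt g (g1 t) t := by
    intro t
    refine HasDerivAt.fun_sum fun x _ => ?_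
    have := ((hinner x t).exp)
    simpa [mul_comm] using this
  have hg1d : ∀ t, HasDerivAt g1 (g2 t) t := by
    intro t
    refine HasDerivAt.fun_sum fun x _ => ?_
    have := ((hinner x t).exp).const_mul (w x)
    simpa [mul_comm, mul_assoc, pow_two] using this
  set h : ℝ → ℝ := fun t => Real.log (g t) with hh_def
  have hhd : ∀ t, HasDerivAt h (g1 t / g t) t :=
    fun t => (hgd t).log (hgpos t).ne'
  have hderiv : deriv h = fun t => g1 t / g t := funext fun t => (hhd t).deriv
  have hkey : ∀ t, g1 t ^ 2 < g2 t * g t := by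
    intro t
    set a : ι → ℝ := fun x => Real.exp (u x + t * w x) with ha_def
    have hapos : ∀ x, 0 < a x := fun x => Real.exp_pos _
    have hId : g t * (g2 t * g t - g1 t ^ 2) = ∑ x, a x * (w x * g t - g1 t) ^ 2 := by
      have hexp : ∀ x : ι, a x * (w x * g t - g1 t) ^ 2 =
          g t ^ 2 * (w x ^ 2 * a x) - 2 * g t * g1 t * (w x * a x) + g1 t ^ 2 * a x := by
        intro x; ring
      rw [Finset.sum_congr rfl fun x _ => hexp x]
      rw [Finset.sum_add_distrib, Finset.sum_sub_distrib, ← Finset.mul_sum, ← Finset.mul_sum,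
        ← Finset.mul_sum]
      have e2 : ∑ x, w x ^ 2 * a x = g2 t := rfl
      have e1 : ∑ x, w x * a x = g1 t := rfl
      have e0 : ∑ x, a x = g t := rfl
      rw [e2, e1, e0]; ring
    have hpos : 0 < ∑ x, a x * (w x * g t - g1 t) ^ 2 := by
      obtain ⟨x0, y0, hxy⟩ := hw
      have hne : ¬ (∀ x : ι, w x * g t - g1 t = 0) := by
        intro hall
        have hx := hall x0
        have hy := hall y0
        have : w x0 * g t = w y0 * g t := by linarith
        exact hxy (mul_right_cancel₀ (hgpos t).ne' this)
      push_neg at hne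
      obtain ⟨x1, hx1⟩ := hne
      refine Finset.sum_pos' (fun x _ => mul_nonneg (hapos x).le (sq_nonneg _)) ⟨x1,
        Finset.mem_univ x1, mul_pos (hapos x1) (by positivity)⟩
    nlinarith [hgpos t, hId, hpos]
  have hcont : Continuous h :=
    continuous_iff_continuousAt.2 fun t => (hhd t).continuousAt
  refine strictConvexOn_univ_of_deriv2_pos hcont ?_
  intro t
  have hq : HasDerivAt (fun t => g1 t / g t) ((g2 t * g t - g1 t * g1 t) / g t ^ 2) t :=
    (hg1d t).div (hgd t) (hgpos t).ne'
  have : deriv (deriv h) t = (g2 t * g t - g1 t * g1 t) / g t ^ 2 := by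
    rw [hderiv]; exact hq.deriv
  show 0 < deriv (deriv h) t
  rw [this]
  have h2 : 0 < g t ^ 2 := pow_pos (hgpos t) 2
  apply div_pos _ h2
  nlinarith [hkey t]

end LSE
section NLLSC

variable {d : ℕ}

lemma minner_phi (Δ : Mat d) (x : Fin d → Bool) :
    minner Δ (phi x) = ∑ i, ∑ j, Δ i j * (b2r x i * b2r x j) := by
  rw [minner_eq]; rfl

lemma symm_const_zero {Δ : Mat d} (hsym : Δ.IsSymm)
    (hconst : ∀ x y : Fin d → Bool, minner Δ (phi x) = minner Δ (phi y)) : Δ = 0 := by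
  classical
  have h0 : minner Δ (phi (fun _ => false)) = 0 := by
    simp [minner_phi, b2r]
  have hall : ∀ x, minner Δ (phi x) = 0 := fun x => (hconst x _).trans h0
  have hdiag : ∀ i, Δ i i = 0 := by
    intro i
    have := hall (fun k => decide (k = i))
    simpa [minner_phi, b2r, mul_ite, ite_mul, Finset.sum_ite_eq'] using this
  have hoff : ∀ i j, i ≠ j → Δ i j + Δ j i = 0 := by
    intro i j hij
    set x : Fin d → Bool := fun k => decide (k = i) || decide (k = j) with hx
    have hb : ∀ k, b2r x k = (if k = i then (1:ℝ) else 0) + (if k = j then 1 else 0) := by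
      intro k
      by_cases h1 : k = i
      · subst h1
        have h2 : k ≠ j := hij
        simp [b2r, hx, h2]
      · by_cases h2 : k = j
        · subst h2
          simp [b2r, hx, h1]
        · simp [b2r, hx, h1, h2]
    have hcomp : minner Δ (phi x) = Δ i i + Δ i j + (Δ j i + Δ j j) := by
      rw [minner_phi]
      have hrow : ∀ a, ∑ b, Δ a b * (b2r x a * b2r x b)
          = b2r x a * (Δ a i + Δ a j) := by
        intro a
        have : ∀ b, Δ a b * (b2r x a * b2r x b)
            = b2r x a * (Δ a b * (if b = i then (1:ℝ) else 0))
              + b2r x a * (Δ a b * (if b = j then (1:ℝ) else 0)) := by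
          intro b; rw [hb b]; ring
        rw [Finset.sum_congr rfl fun b _ => this b, Finset.sum_add_distrib,
          ← Finset.mul_sum, ← Finset.mul_sum]
        simp only [mul_ite, mul_zero, Finset.sum_ite_eq', Finset.mem_univ, if_true]
        ring
      rw [Finset.sum_congr rfl fun a _ => hrow a]
      have : ∀ a, b2r x a * (Δ a i + Δ a j)
          = (if a = i then (1:ℝ) else 0) * (Δ a i + Δ a j)
            + (if a = j then (1:ℝ) else 0) * (Δ a i + Δ a j) := by
        intro a; rw [hb a]; ring
      rw [Finset.sum_congr rfl fun a _ => this a, Finset.sum_add_distrib]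
      simp [ite_mul, Finset.sum_ite_eq']
    have := hall x
    rw [hcomp] at this
    rw [hdiag i, hdiag j] at this
    linarith
  ext i j
  by_cases hij : i = j
  · subst hij; simpa using hdiag i
  · have h1 := hoff i j hij
    have h2 : Δ j i = Δ i j := by
      have := hsym
      rw [Matrix.IsSymm] at this
      calc Δ j i = Δᵀ i j := rfl
        _ = Δ i j := by rw [this]
    simp only [Matrix.zero_apply]
    linarith

lemma nll_strictConvexOn (Phin : Mat d) :
    StrictConvexOn ℝ {Θ : Mat d | Θ.IsSymm} (nll Phin) := by
  constructor
  · intro A hA B hB a b ha hb hab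
    show (a • A + b • B).IsSymm
    rw [Matrix.IsSymm, Matrix.transpose_add, Matrix.transpose_smul, Matrix.transpose_smul,
      hA, hB]
  · intro A hA B hB hne a b ha hb hab
    set Δ : Mat d := A - B with hΔ
    have hΔsym : Δ.IsSymm := by
      rw [Matrix.IsSymm, hΔ, Matrix.transpose_sub, hA, hB]
    have hΔne : Δ ≠ 0 := sub_ne_zero.2 hne
    set u : (Fin d → Bool) → ℝ := fun x => minner B (phi x) with hu
    set w : (Fin d → Bool) → ℝ := fun x => minner Δ (phi x) with hwdef
    have hw : ∃ x y : Fin d → Bool, w x ≠ w y := by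
      by_contra hc
      push_neg at hc
      exact hΔne (symm_const_zero hΔsym hc)
    have hkey : ∀ t : ℝ, logA (B + t • Δ) = Real.log (∑ x, Real.exp (u x + t * w x)) := by
      intro t
      unfold logA
      congr 1
      refine Finset.sum_congr rfl fun x _ => ?_
      rw [minner_add_left, minner_smul_left]
    have hsc := lse_strictConvexOn u w hw
    have hcombo : a • A + b • B = B + a • Δ := by
      have hb' : b = 1 - a := by linarith
      rw [hb', hΔ, sub_smul, one_smul, smul_sub]; abel
    have hA' : A = B + (1:ℝ) • Δ := by rw [one_smul, hΔ]; abel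
    have hlt := hsc.2 (Set.mem_univ (1:ℝ)) (Set.mem_univ (0:ℝ)) one_ne_zero ha hb hab
    simp only [smul_eq_mul, mul_one, mul_zero, add_zero] at hlt
    have hlogA : logA (a • A + b • B) < a * logA A + b * logA B := by
      rw [hcombo, hkey a]
      have h1 : logA A = Real.log (∑ x, Real.exp (u x + 1 * w x)) := by
        rw [hA', hkey 1]
      have h0 : logA B = Real.log (∑ x, Real.exp (u x + 0 * w x)) := by
        have : B = B + (0:ℝ) • Δ := by rw [zero_smul, add_zero]
        rw [this, hkey 0]
      rw [h1, h0]
      exact hlt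
    have hlin : minner (a • A + b • B) Phin = a * minner A Phin + b * minner B Phin := by
      rw [minner_add_left, minner_smul_left, minner_smul_left]
    show nll Phin (a • A + b • B) < a • nll Phin A + b • nll Phin B
    unfold nll
    simp only [smul_eq_mul]
    rw [hlin]
    nlinarith [hlogA]

end NLLSC
section ContAndMore

variable {d : ℕ}

lemma continuous_minner_left (P : Mat d) : Continuous fun Θ : Mat d => minner Θ P := by
  simp only [minner_eq]
  exact continuous_finset_sum _ fun i _ => continuous_finset_sum _ fun j _ =>
    (continuous_id.matrix_elem i j).mul continuous_const

lemma continuous_logA : Continuous (logA : Mat d → ℝ) := by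
  have hsum : Continuous fun Θ : Mat d => ∑ x : Fin d → Bool, Real.exp (minner Θ (phi x)) :=
    continuous_finset_sum _ fun x _ => (continuous_minner_left (phi x)).rexp
  have hpos : ∀ Θ : Mat d, (fun Θ : Mat d => ∑ x : Fin d → Bool,
      Real.exp (minner Θ (phi x))) Θ ≠ 0 :=
    fun Θ => (Finset.sum_pos (fun x _ => Real.exp_pos _) Finset.univ_nonempty).ne'
  exact hsum.log hpos

lemma continuous_nll (Phin : Mat d) : Continuous (nll Phin) :=
  continuous_logA.sub (continuous_minner_left Phin)

lemma continuous_norm1 : Continuous (norm1 : Mat d → ℝ) :=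
  continuous_finset_sum _ fun i _ => continuous_finset_sum _ fun j _ =>
    (continuous_id.matrix_elem i j).abs

lemma norm1_sub_comm (A B : Mat d) : norm1 (A - B) = norm1 (B - A) := by
  unfold norm1
  refine Finset.sum_congr rfl fun i _ => Finset.sum_congr rfl fun j _ => ?_
  rw [Matrix.sub_apply, Matrix.sub_apply, abs_sub_comm]

lemma continuous_nucNorm : Continuous (nucNorm : Mat d → ℝ) := by
  rw [continuous_iff_continuousAt]
  intro A₀
  have hup : ∀ A : Mat d, nucNorm A ≤ nucNorm A₀ + norm1 (A - A₀) := fun A => nucNorm_lip A A₀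
  have hlo : ∀ A : Mat d, nucNorm A₀ - norm1 (A - A₀) ≤ nucNorm A := by
    intro A
    have h := nucNorm_lip A₀ A
    rw [norm1_sub_comm A₀ A] at h
    linarith
  have hzero : Filter.Tendsto (fun A : Mat d => norm1 (A - A₀)) (nhds A₀) (nhds 0) := by
    have hcont : Continuous fun A : Mat d => norm1 (A - A₀) :=
      continuous_norm1.comp (continuous_id.sub continuous_const)
    have h0 : norm1 ((0 : Mat d)) = 0 := by simp [norm1]
    simpa [h0, sub_self] using hcont.tendsto A₀
  have l1 : Filter.Tendsto (fun A : Mat d => nucNorm A₀ - norm1 (A - A₀)) (nhds A₀)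
      (nhds (nucNorm A₀)) := by
    simpa using tendsto_const_nhds.sub hzero
  have l2 : Filter.Tendsto (fun A : Mat d => nucNorm A₀ + norm1 (A - A₀)) (nhds A₀)
      (nhds (nucNorm A₀)) := by
    simpa using tendsto_const_nhds.add hzero
  exact tendsto_of_tendsto_of_tendsto_of_le_of_le l1 l2 hlo hup

lemma nll_nonneg {n : ℕ} (hn : 1 ≤ n) (xs : Fin n → (Fin d → Bool)) (Θ : Mat d) :
    0 ≤ nll (empPhi xs) Θ := by
  have hle : ∀ k : Fin n, minner Θ (phi (xs k)) ≤ logA Θ := by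
    intro k
    unfold logA
    have h1 : Real.exp (minner Θ (phi (xs k))) ≤ ∑ x : Fin d → Bool,
        Real.exp (minner Θ (phi x)) :=
      Finset.single_le_sum (f := fun x => Real.exp (minner Θ (phi x)))
        (fun x _ => (Real.exp_pos _).le) (Finset.mem_univ _)
    calc minner Θ (phi (xs k)) = Real.log (Real.exp (minner Θ (phi (xs k)))) :=
          (Real.log_exp _).symm
      _ ≤ Real.log (∑ x : Fin d → Bool, Real.exp (minner Θ (phi x))) := by
          apply Real.log_le_log (Real.exp_pos _) h1
  have hemp : minner Θ (empPhi xs) = (n : ℝ)⁻¹ * ∑ k, minner Θ (phi (xs k)) := by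
    unfold empPhi
    rw [minner_smul_right, minner_sum_right]
  have hnpos : (0 : ℝ) < n := by
    have : (1 : ℝ) ≤ n := by exact_mod_cast hn
    linarith
  have hsum : ∑ k : Fin n, minner Θ (phi (xs k)) ≤ n * logA Θ := by
    calc ∑ k : Fin n, minner Θ (phi (xs k)) ≤ ∑ _k : Fin n, logA Θ :=
          Finset.sum_le_sum fun k _ => hle k
      _ = n * logA Θ := by
          rw [Finset.sum_const, Finset.card_univ, Fintype.card_fin, nsmul_eq_mul]
  unfold nll
  rw [hemp]
  have h2 : (n : ℝ)⁻¹ * ∑ k, minner Θ (phi (xs k)) ≤ (n : ℝ)⁻¹ * (n * logA Θ) :=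
    mul_le_mul_of_nonneg_left hsum (inv_nonneg.2 hnpos.le)
  rw [← mul_assoc, inv_mul_cancel₀ hnpos.ne', one_mul] at h2
  linarith

lemma obj_strictConvexOn (Phin : Mat d) {lam γ : ℝ} (hlam : 0 < lam) (hγ : 0 < γ)
    (Om' T' : Submodule ℝ (Mat d))
    (hOm' : ∀ M ∈ Om', Matrix.IsSymm M) (hT' : ∀ M ∈ T', Matrix.IsSymm M)
    (htrans : Om' ⊓ T' = ⊥) :
    StrictConvexOn ℝ ((Om'.prod T' : Submodule ℝ (Mat d × Mat d)) : Set (Mat d × Mat d))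
      (fun p => nll Phin (p.1 + p.2) + lam * (γ * norm1 p.1 + nucNorm p.2)) := by
  refine ⟨(Om'.prod T').convex, ?_⟩
  intro p hp q hq hne a b ha hb hab
  rw [SetLike.mem_coe, Submodule.mem_prod] at hp hq
  have hpsym : (p.1 + p.2).IsSymm := (hOm' p.1 hp.1).add (hT' p.2 hp.2)
  have hqsym : (q.1 + q.2).IsSymm := (hOm' q.1 hq.1).add (hT' q.2 hq.2)
  have hsne : p.1 + p.2 ≠ q.1 + q.2 := by
    intro h
    have h1 : p.1 - q.1 = q.2 - p.2 := by
      rw [sub_eq_sub_iff_add_eq_add, h, add_comm]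
    have hmem : p.1 - q.1 ∈ Om' ⊓ T' := by
      refine ⟨sub_mem hp.1 hq.1, ?_⟩
      rw [h1]
      exact sub_mem hq.2 hp.2
    rw [htrans, Submodule.mem_bot] at hmem
    have e1 : p.1 = q.1 := sub_eq_zero.1 hmem
    have e2 : p.2 = q.2 := by
      have := h
      rw [e1] at this
      exact add_left_cancel this
    exact hne (Prod.ext e1 e2)
  have key := (nll_strictConvexOn Phin).2 hpsym hqsym hsne ha hb hab
  simp only [smul_eq_mul] at key
  have h1 : norm1 (a • p.1 + b • q.1) ≤ a * norm1 p.1 + b * norm1 q.1 :=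
    norm1_comb ha.le hb.le _ _
  have h2 : nucNorm (a • p.2 + b • q.2) ≤ a * nucNorm p.2 + b * nucNorm q.2 :=
    nucNorm_comb ha.le hb.le _ _
  have e1 : γ * norm1 (a • p.1 + b • q.1) ≤ γ * (a * norm1 p.1 + b * norm1 q.1) :=
    mul_le_mul_of_nonneg_left h1 hγ.le
  have e3 : γ * norm1 (a • p.1 + b • q.1) + nucNorm (a • p.2 + b • q.2)
      ≤ γ * (a * norm1 p.1 + b * norm1 q.1) + (a * nucNorm p.2 + b * nucNorm q.2) :=
    add_le_add e1 h2
  have e4 := mul_le_mul_of_nonneg_left e3 hlam.le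
  have h3 : lam * (γ * norm1 (a • p.1 + b • q.1) + nucNorm (a • p.2 + b • q.2))
      ≤ a * (lam * (γ * norm1 p.1 + nucNorm p.2))
        + b * (lam * (γ * norm1 q.1 + nucNorm q.2)) := by
    calc lam * (γ * norm1 (a • p.1 + b • q.1) + nucNorm (a • p.2 + b • q.2))
        ≤ lam * (γ * (a * norm1 p.1 + b * norm1 q.1)
            + (a * nucNorm p.2 + b * nucNorm q.2)) := e4
      _ = a * (lam * (γ * norm1 p.1 + nucNorm p.2))
            + b * (lam * (γ * norm1 q.1 + nucNorm q.2)) := by ring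
  show nll Phin ((a • p + b • q).1 + (a • p + b • q).2)
      + lam * (γ * norm1 (a • p + b • q).1 + nucNorm (a • p + b • q).2)
      < a • (nll Phin (p.1 + p.2) + lam * (γ * norm1 p.1 + nucNorm p.2))
        + b • (nll Phin (q.1 + q.2) + lam * (γ * norm1 q.1 + nucNorm q.2))
  have hc1 : (a • p + b • q).1 = a • p.1 + b • q.1 := rfl
  have hc2 : (a • p + b • q).2 = a • p.2 + b • q.2 := rfl
  rw [hc1, hc2]
  have heq : a • p.1 + b • q.1 + (a • p.2 + b • q.2)
      = a • (p.1 + p.2) + b • (q.1 + q.2) := by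
    rw [smul_add, smul_add]; abel
  rw [heq]
  simp only [smul_eq_mul]
  linarith [key, h3]

end ContAndMore

/-- Proposition 4, uniqueness for the tangent-space constrained problem:
for transverse subspaces `Ω', T'` of `Sym(d)`, the problem
`min_{(S,L) ∈ Ω' × T'} ℓ(S+L) + λ(γ‖S‖₁ + ‖L‖_*)` is feasible and has a unique
solution; in particular the Ising negative log-likelihood is strictly convex on
`Sym(d)` and the objective is strictly convex on `Ω' × T'`. -/
theorem tangent_constrained_unique_solution (d n : ℕ) (hd : 1 ≤ d) (hn : 1 ≤ n)
    (xs : Fin n → (Fin d → Bool)) (lam γ : ℝ) (hlam : 0 < lam) (hγ : 0 < γ)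
    (Om' T' : Submodule ℝ (Mat d))
    (hOm' : ∀ M ∈ Om', Matrix.IsSymm M) (hT' : ∀ M ∈ T', Matrix.IsSymm M)
    (htrans : Om' ⊓ T' = ⊥) :
    (∃! p : Mat d × Mat d, IsYSol Om' T' (empPhi xs) lam γ p) ∧
    StrictConvexOn ℝ {Θ : Mat d | Θ.IsSymm} (nll (empPhi xs)) ∧
    StrictConvexOn ℝ ((Om'.prod T' : Submodule ℝ (Mat d × Mat d)) : Set (Mat d × Mat d))
      (fun p => nll (empPhi xs) (p.1 + p.2) + lam * (γ * norm1 p.1 + nucNorm p.2)) := by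
  classical
  set Phin : Mat d := empPhi xs with hPhin
  set f : Mat d × Mat d → ℝ :=
    fun p => nll Phin (p.1 + p.2) + lam * (γ * norm1 p.1 + nucNorm p.2) with hf
  set K : Set (Mat d × Mat d) :=
    ((Om'.prod T' : Submodule ℝ (Mat d × Mat d)) : Set (Mat d × Mat d)) with hK
  have hsc3 := obj_strictConvexOn Phin hlam hγ Om' T' hOm' hT' htrans
  refine ⟨?_, nll_strictConvexOn Phin, hsc3⟩
  have hmemK : ∀ p : Mat d × Mat d, p ∈ K ↔ p.1 ∈ Om' ∧ p.2 ∈ T' := by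
    intro p
    rw [hK, SetLike.mem_coe, Submodule.mem_prod]
  have hcont : Continuous f := by
    refine Continuous.add ?_ ?_
    · exact (continuous_nll Phin).comp (continuous_fst.add continuous_snd)
    · exact continuous_const.mul
        ((continuous_const.mul (continuous_norm1.comp continuous_fst)).add
          (continuous_nucNorm.comp continuous_snd))
  set c : ℝ := f (0, 0) with hc
  -- entry bounds on the sublevel set
  set C : ℝ := max (c / (lam * γ)) (c / lam) with hC
  have hbound : ∀ p : Mat d × Mat d, f p ≤ c →
      (∀ i j, |p.1 i j| ≤ C) ∧ (∀ i j, |p.2 i j| ≤ C) := by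
    intro p hp
    have hnll : 0 ≤ nll Phin (p.1 + p.2) := nll_nonneg hn xs _
    have hpen : lam * (γ * norm1 p.1 + nucNorm p.2) ≤ c := by
      have : f p = nll Phin (p.1 + p.2) + lam * (γ * norm1 p.1 + nucNorm p.2) := rfl
      linarith [hp, hnll, this ▸ hp]
    have hn1 : 0 ≤ norm1 p.1 := norm1_nonneg _
    have hn2 : 0 ≤ nucNorm p.2 := nucNorm_nonneg _
    have hb1 : lam * γ * norm1 p.1 ≤ c := by nlinarith [mul_nonneg hlam.le hn2]
    have hb2 : lam * nucNorm p.2 ≤ c := by nlinarith [mul_nonneg (mul_nonneg hlam.le hγ.le) hn1]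
    have hlamγ : 0 < lam * γ := mul_pos hlam hγ
    constructor
    · intro i j
      calc |p.1 i j| ≤ norm1 p.1 := abs_entry_le_norm1 _ i j
        _ ≤ c / (lam * γ) := by rw [le_div_iff₀ hlamγ]; linarith [hb1]
        _ ≤ C := le_max_left _ _
    · intro i j
      calc |p.2 i j| ≤ nucNorm p.2 := abs_entry_le_nucNorm _ i j
        _ ≤ c / lam := by rw [le_div_iff₀ hlam]; linarith [hb2]
        _ ≤ C := le_max_right _ _
  -- a compact box
  set Box : Set (Mat d) := {M : Mat d | ∀ i j, |M i j| ≤ C} with hBox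
  have hBoxcomp : IsCompact Box := by
    set φ : ((Fin d × Fin d) → ℝ) → Mat d := fun v => Matrix.of fun i j => v (i, j) with hφdef
    have hφ : Continuous φ := continuous_matrix fun i j => continuous_apply (i, j)
    have hIc : IsCompact (Set.univ.pi fun _ : Fin d × Fin d => Set.Icc (-C) C) :=
      isCompact_univ_pi fun _ => isCompact_Icc
    have hsub : Box ⊆ φ '' (Set.univ.pi fun _ : Fin d × Fin d => Set.Icc (-C) C) := by
      intro M hM
      refine ⟨fun q => M q.1 q.2, ?_, ?_⟩
      · intro q _
        rw [Set.mem_Icc]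
        exact abs_le.1 (hM q.1 q.2)
      · rfl
    have hBoxclosed : IsClosed Box := by
      have : Box = ⋂ i, ⋂ j, {M : Mat d | |M i j| ≤ C} := by
        ext M
        simp [hBox, Set.mem_iInter]
      rw [this]
      exact isClosed_iInter fun i => isClosed_iInter fun j =>
        isClosed_le (continuous_id.matrix_elem i j).abs continuous_const
    exact (hIc.image hφ).of_isClosed_subset hBoxclosed hsub
  set K₀ : Set (Mat d × Mat d) := K ∩ {p | f p ≤ c} with hK₀
  have hKclosed : IsClosed K := (Om'.prod T').closed_of_finiteDimensional
  have hK₀closed : IsClosed K₀ := hKclosed.inter (isClosed_le hcont continuous_const)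
  have hK₀sub : K₀ ⊆ Box ×ˢ Box := by
    rintro p ⟨_, hp2⟩
    obtain ⟨h1, h2⟩ := hbound p hp2
    exact ⟨h1, h2⟩
  have hK₀comp : IsCompact K₀ :=
    (hBoxcomp.prod hBoxcomp).of_isClosed_subset hK₀closed hK₀sub
  have hzeroK : (0, 0) ∈ K := (hmemK (0, 0)).2 ⟨Om'.zero_mem, T'.zero_mem⟩
  have hK₀ne : K₀.Nonempty := ⟨(0, 0), hzeroK, le_refl c⟩
  obtain ⟨p, hpK₀, hpmin⟩ := hK₀comp.exists_isMinOn hK₀ne hcont.continuousOn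
  have hpglobal : ∀ q ∈ K, f p ≤ f q := by
    intro q hq
    by_cases hqc : f q ≤ c
    · exact (isMinOn_iff.1 hpmin) q ⟨hq, hqc⟩
    · have h1 : f p ≤ c := (isMinOn_iff.1 hpmin) (0, 0) ⟨hzeroK, le_refl c⟩
      linarith
  have hpK : p ∈ K := hpK₀.1
  have hpsol : IsYSol Om' T' Phin lam γ p := by
    refine ⟨((hmemK p).1 hpK).1, ((hmemK p).1 hpK).2, ?_⟩
    intro q hq1 hq2
    exact hpglobal q ((hmemK q).2 ⟨hq1, hq2⟩)
  refine ⟨p, hpsol, ?_⟩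
  intro q hqsol
  have hqK : q ∈ K := (hmemK q).2 ⟨hqsol.1, hqsol.2.1⟩
  have hqmin : IsMinOn f K q := by
    rw [isMinOn_iff]
    intro r hr
    exact hqsol.2.2 r ((hmemK r).1 hr).1 ((hmemK r).1 hr).2
  have hpmin' : IsMinOn f K p := by
    rw [isMinOn_iff]
    intro r hr
    exact hpglobal r hr
  exact hsc3.eq_of_isMinOn hqmin hpmin' hqK hpK

end IsingSL
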